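/- Let ω : (0,1] → ℝ be nonnegative with 4π ∫₀¹ r⁴ ω(r) dr = 6 and 4π ∫₀¹ r⁶ ω(r) dr ≤ 4π ∫₀¹ r⁴ ω(r) dr. Define λ_δ(ξ) = (4π/δ²) ∫₀^{π/2} sin φ ∫₀¹ r² ω(r)(1 − cos(r cos(φ) δ|ξ|)) dr dφ for ξ ∈ ℝ³. Then for all ξ with 0 < δ|ξ| ≤ 1, λ_δ(ξ) ≥ |ξ|² − (1/20)|ξ|²(δ|ξ|)² ≥ (1/2)|ξ|². -/

import Mathlib

open Real MeasureTheory intervalIntegral Set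

lemma sub_cube_le_sin' {y : ℝ} (hy : 0 ≤ y) : y - y ^ 3 / 6 ≤ Real.sin y := by
  have hder : ∀ t : ℝ, HasDerivAt (fun u => Real.sin u - (u - u ^ 3 / 6))
      (Real.cos t - (1 - t ^ 2 / 2)) t := by
    intro t
    have h1 : HasDerivAt (fun u : ℝ => u - u ^ 3 / 6) (1 - 3 * t ^ 2 / 6) t :=
      (hasDerivAt_id t).sub ((hasDerivAt_pow 3 t).div_const 6)
    have := (Real.hasDerivAt_sin t).sub h1
    exact this.congr_deriv (by ring)
  have hmono : Monotone fun u => Real.sin u - (u - u ^ 3 / 6) := by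
    apply monotone_of_deriv_nonneg
    · exact fun t => (hder t).differentiableAt
    · intro t
      rw [(hder t).deriv]
      have := Real.one_sub_sq_div_two_le_cos (x := t)
      linarith
  have := hmono hy
  simp at this
  linarith

lemma cos_le_taylor' {x : ℝ} (hx : 0 ≤ x) : Real.cos x ≤ 1 - x ^ 2 / 2 + x ^ 4 / 24 := by
  have hder : ∀ t : ℝ, HasDerivAt (fun u => (1 - u ^ 2 / 2 + u ^ 4 / 24) - Real.cos u)
      (Real.sin t - (t - t ^ 3 / 6)) t := by
    intro t
    have h1 : HasDerivAt (fun u : ℝ => 1 - u ^ 2 / 2 + u ^ 4 / 24)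
        (-(2 * t) / 2 + 4 * t ^ 3 / 24) t := by
      exact (((hasDerivAt_pow 2 t).div_const 2).const_sub 1).add ((hasDerivAt_pow 4 t).div_const 24)
        |>.congr_deriv (by ring_nf)
    have := h1.sub (Real.hasDerivAt_cos t)
    exact this.congr_deriv (by ring)
  have hmono : MonotoneOn (fun u => (1 - u ^ 2 / 2 + u ^ 4 / 24) - Real.cos u) (Set.Ici 0) := by
    apply monotoneOn_of_deriv_nonneg (convex_Ici 0)
    · exact fun t _ => ((hder t).differentiableAt.continuousAt.continuousWithinAt)
    · exact fun t _ => (hder t).differentiableAt.differentiableWithinAt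
    · intro t ht
      rw [interior_Ici] at ht
      rw [(hder t).deriv]
      have := sub_cube_le_sin' ht.le
      linarith
  have := hmono (Set.self_mem_Ici) (Set.mem_Ici.mpr hx) hx
  simp at this
  linarith

set_option maxHeartbeats 1000000 in
theorem symbol_lower_bound_low_freq (ω : ℝ → ℝ)
    (hω : ∀ r ∈ Set.Ioc (0 : ℝ) 1, 0 ≤ ω r)
    (hnorm : 4 * Real.pi * ∫ r in (0:ℝ)..1, r ^ 4 * ω r = 6)
    (hmom : 4 * Real.pi * ∫ r in (0:ℝ)..1, r ^ 6 * ω r ≤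
      4 * Real.pi * ∫ r in (0:ℝ)..1, r ^ 4 * ω r)
    (δ : ℝ) (hδ : 0 < δ) (ξ : EuclideanSpace ℝ (Fin 3))
    (hξ0 : 0 < δ * ‖ξ‖) (hξ1 : δ * ‖ξ‖ ≤ 1) :
    ‖ξ‖ ^ 2 - (1 / 20) * ‖ξ‖ ^ 2 * (δ * ‖ξ‖) ^ 2 ≤
        (4 * Real.pi / δ ^ 2) *
          ∫ φ in (0:ℝ)..(Real.pi / 2), Real.sin φ *
            ∫ r in (0:ℝ)..1, r ^ 2 * ω r * (1 - Real.cos (r * Real.cos φ * (δ * ‖ξ‖))) ∧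
      (1 / 2) * ‖ξ‖ ^ 2 ≤
        (4 * Real.pi / δ ^ 2) *
          ∫ φ in (0:ℝ)..(Real.pi / 2), Real.sin φ *
            ∫ r in (0:ℝ)..1, r ^ 2 * ω r * (1 - Real.cos (r * Real.cos φ * (δ * ‖ξ‖))) := by
  have pi_pos := Real.pi_pos
  set s : ℝ := δ * ‖ξ‖ with hs_def
  have hs0 : 0 < s := hξ0
  have hs1 : s ≤ 1 := hξ1
  set A : ℝ := ∫ r in (0:ℝ)..1, r ^ 4 * ω r with hA_def
  set B : ℝ := ∫ r in (0:ℝ)..1, r ^ 6 * ω r with hB_def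
  -- integrability of r^4 ω
  have h4 : IntervalIntegrable (fun r => r ^ 4 * ω r) volume 0 1 := by
    by_contra h
    rw [intervalIntegral.integral_undef h] at hA_def
    rw [hA_def] at hnorm; norm_num at hnorm
  have hi4 : IntegrableOn (fun r => r ^ 4 * ω r) (Set.Ioc (0:ℝ) 1) volume :=
    (intervalIntegrable_iff_integrableOn_Ioc_of_le (by norm_num)).mp h4
  have hm4 := hi4.aestronglyMeasurable
  -- integrability of r^6 ω
  have hm6 : AEStronglyMeasurable (fun r : ℝ => r ^ 6 * ω r)
      (volume.restrict (Set.Ioc (0:ℝ) 1)) := by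
    have : (fun r : ℝ => r ^ 6 * ω r) = fun r => r ^ 2 * (r ^ 4 * ω r) := by
      funext r; ring
    rw [this]
    exact (continuous_pow 2).aestronglyMeasurable.mul hm4
  have hae_pos : ∀ᵐ r ∂(volume.restrict (Set.Ioc (0:ℝ) 1)), r ∈ Set.Ioc (0:ℝ) 1 :=
    (ae_restrict_iff' measurableSet_Ioc).mpr (Filter.Eventually.of_forall fun r hr => hr)
  have hi6 : IntegrableOn (fun r : ℝ => r ^ 6 * ω r) (Set.Ioc (0:ℝ) 1) volume := by
    refine MeasureTheory.Integrable.mono hi4 hm6 ?_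
    filter_upwards [hae_pos] with r hr
    have h1 : (0:ℝ) < r := hr.1
    have h2 : r ≤ 1 := hr.2
    have hw := hω r hr
    rw [Real.norm_eq_abs, Real.norm_eq_abs, abs_of_nonneg (by positivity),
      abs_of_nonneg (by positivity)]
    have : r ^ 6 ≤ r ^ 4 := pow_le_pow_of_le_one h1.le h2 (by norm_num)
    exact mul_le_mul_of_nonneg_right this hw
  have h6 : IntervalIntegrable (fun r => r ^ 6 * ω r) volume 0 1 :=
    (intervalIntegrable_iff_integrableOn_Ioc_of_le (by norm_num)).mpr hi6
  have hB0 : 0 ≤ B := by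
    apply intervalIntegral.integral_nonneg (by norm_num)
    intro r hr
    rcases eq_or_lt_of_le hr.1 with h | h
    · simp [← h]
    · exact mul_nonneg (by positivity) (hω r ⟨h, hr.2⟩)
  have hBA : B ≤ A := by
    have h4π : (0:ℝ) < 4 * Real.pi := by positivity
    exact le_of_mul_le_mul_left hmom h4π
  -- pointwise bound for the inner integrand
  have hcos_up : ∀ t : ℝ, 1 - Real.cos t ≤ t ^ 2 / 2 := by
    intro t
    have := Real.one_sub_sq_div_two_le_cos (x := t)
    linarith
  -- inner integrand integrability and bound, for any c with |c| ≤ 1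
  have hinner_int : ∀ c : ℝ, |c| ≤ 1 →
      IntegrableOn (fun r : ℝ => r ^ 2 * ω r * (1 - Real.cos (r * c * s)))
        (Set.Ioc (0:ℝ) 1) volume := by
    intro c hc
    have hmeas : AEStronglyMeasurable (fun r : ℝ => r ^ 2 * ω r * (1 - Real.cos (r * c * s)))
        (volume.restrict (Set.Ioc (0:ℝ) 1)) := by
      have hg : AEStronglyMeasurable
          (fun r : ℝ => (r ^ 4 * ω r) * ((1 - Real.cos (r * c * s)) / r ^ 2))
          (volume.restrict (Set.Ioc (0:ℝ) 1)) := by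
        refine hm4.mul ?_
        exact ((Measurable.sub measurable_const
          (Real.measurable_cos.comp (by fun_prop))).div ((continuous_pow 2).measurable)).aestronglyMeasurable
      refine hg.congr ?_
      filter_upwards [hae_pos] with r hr
      have h1 : (0:ℝ) < r := hr.1
      field_simp
    refine (hi4.div_const 2).mono' hmeas ?_
    filter_upwards [hae_pos] with r hr
    have h1 : (0:ℝ) < r := hr.1
    have h2 : r ≤ 1 := hr.2
    have hw := hω r hr
    have hcos1 : Real.cos (r * c * s) ≤ 1 := Real.cos_le_one _
    have hnn : 0 ≤ r ^ 2 * ω r := mul_nonneg (by positivity) hw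
    rw [Real.norm_eq_abs, abs_of_nonneg (mul_nonneg hnn (by linarith))]
    have hb := hcos_up (r * c * s)
    have hsq : (r * c * s) ^ 2 ≤ r ^ 2 := by
      have he : (r * c * s) ^ 2 = r ^ 2 * (c ^ 2 * s ^ 2) := by ring
      have hc2 : c ^ 2 ≤ 1 := by rw [← sq_abs]; nlinarith [abs_nonneg c]
      have hs2 : s ^ 2 ≤ 1 := by nlinarith
      rw [he]
      have hx : c ^ 2 * s ^ 2 ≤ 1 := by nlinarith [sq_nonneg c, sq_nonneg s]
      have hx0 : 0 ≤ c ^ 2 * s ^ 2 := by positivity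
      calc r ^ 2 * (c ^ 2 * s ^ 2) ≤ r ^ 2 * 1 :=
            mul_le_mul_of_nonneg_left hx (sq_nonneg r)
        _ = r ^ 2 := by ring
    calc r ^ 2 * ω r * (1 - Real.cos (r * c * s))
        ≤ r ^ 2 * ω r * (r ^ 2 / 2) :=
          mul_le_mul_of_nonneg_left (by linarith) hnn
      _ = r ^ 4 * ω r / 2 := by ring
  -- the inner integral lower bound
  have hinner : ∀ c : ℝ, 0 ≤ c → c ≤ 1 →
      c ^ 2 * s ^ 2 / 2 * A - c ^ 4 * s ^ 4 / 24 * B ≤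
        ∫ r in (0:ℝ)..1, r ^ 2 * ω r * (1 - Real.cos (r * c * s)) := by
    intro c hc0 hc1
    have hIi : IntervalIntegrable (fun r : ℝ => r ^ 2 * ω r * (1 - Real.cos (r * c * s)))
        volume 0 1 :=
      (intervalIntegrable_iff_integrableOn_Ioc_of_le (by norm_num)).mpr
        (hinner_int c (by rw [abs_of_nonneg hc0]; exact hc1))
    have hLi : IntervalIntegrable
        (fun r : ℝ => c ^ 2 * s ^ 2 / 2 * (r ^ 4 * ω r) - c ^ 4 * s ^ 4 / 24 * (r ^ 6 * ω r))
        volume 0 1 := (h4.const_mul _).sub (h6.const_mul _)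
    have heq : ∫ r in (0:ℝ)..1,
        (c ^ 2 * s ^ 2 / 2 * (r ^ 4 * ω r) - c ^ 4 * s ^ 4 / 24 * (r ^ 6 * ω r)) =
        c ^ 2 * s ^ 2 / 2 * A - c ^ 4 * s ^ 4 / 24 * B := by
      rw [intervalIntegral.integral_sub (h4.const_mul _) (h6.const_mul _),
        intervalIntegral.integral_const_mul, intervalIntegral.integral_const_mul]
    rw [← heq]
    apply intervalIntegral.integral_mono_on (by norm_num) hLi hIi
    intro r hr
    rcases eq_or_lt_of_le hr.1 with h | h
    · simp [← h]
    · have hw := hω r ⟨h, hr.2⟩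
      have h2 : r ≤ 1 := hr.2
      have ht0 : 0 ≤ r * c * s := by positivity
      have hct := cos_le_taylor' ht0
      nlinarith [mul_nonneg (mul_nonneg (sq_nonneg r) hw)
        (sub_nonneg.mpr (hcos_up (r * c * s))), sq_nonneg (r * c * s),
        mul_le_mul_of_nonneg_left
          (show (r * c * s) ^ 2 / 2 - (r * c * s) ^ 4 / 24 ≤ 1 - Real.cos (r * c * s) by linarith)
          (mul_nonneg (sq_nonneg r) hw)]
  -- continuity of the inner integral in φ
  have hIcont : Continuous fun φ : ℝ =>
      ∫ r in (0:ℝ)..1, r ^ 2 * ω r * (1 - Real.cos (r * Real.cos φ * s)) := by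
    have : ∀ φ : ℝ, (∫ r in (0:ℝ)..1, r ^ 2 * ω r * (1 - Real.cos (r * Real.cos φ * s))) =
        ∫ r in Set.Ioc (0:ℝ) 1, r ^ 2 * ω r * (1 - Real.cos (r * Real.cos φ * s)) := by
      intro φ; rw [intervalIntegral.integral_of_le (by norm_num)]
    simp only [this]
    apply MeasureTheory.continuous_of_dominated
      (bound := fun r : ℝ => r ^ 4 * ω r / 2)
    · intro φ
      exact (hinner_int (Real.cos φ) (Real.abs_cos_le_one φ)).aestronglyMeasurable
    · intro φ
      filter_upwards [hae_pos] with r hr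
      have h1 : (0:ℝ) < r := hr.1
      have h2 : r ≤ 1 := hr.2
      have hw := hω r hr
      have hcos1 : Real.cos (r * Real.cos φ * s) ≤ 1 := Real.cos_le_one _
      have hnn : 0 ≤ r ^ 2 * ω r := mul_nonneg (by positivity) hw
      rw [Real.norm_eq_abs, abs_of_nonneg (mul_nonneg hnn (by linarith))]
      have hb := hcos_up (r * Real.cos φ * s)
      have hsq : (r * Real.cos φ * s) ^ 2 ≤ r ^ 2 := by
        have he : (r * Real.cos φ * s) ^ 2 = r ^ 2 * (Real.cos φ ^ 2 * s ^ 2) := by ring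
        have hc2 : Real.cos φ ^ 2 ≤ 1 := Real.cos_sq_le_one φ
        have hs2 : s ^ 2 ≤ 1 := by nlinarith
        rw [he]
        have hx : Real.cos φ ^ 2 * s ^ 2 ≤ 1 := by nlinarith [sq_nonneg (Real.cos φ), sq_nonneg s]
        calc r ^ 2 * (Real.cos φ ^ 2 * s ^ 2) ≤ r ^ 2 * 1 :=
              mul_le_mul_of_nonneg_left hx (sq_nonneg r)
          _ = r ^ 2 := by ring
      calc r ^ 2 * ω r * (1 - Real.cos (r * Real.cos φ * s))
          ≤ r ^ 2 * ω r * (r ^ 2 / 2) :=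
            mul_le_mul_of_nonneg_left (by linarith) hnn
        _ = r ^ 4 * ω r / 2 := by ring
    · exact hi4.div_const 2
    · filter_upwards [hae_pos] with r _
      fun_prop
  -- outer integral bound
  have hJ1 : (∫ φ in (0:ℝ)..(Real.pi/2), Real.sin φ * Real.cos φ ^ 2) = 1 / 3 := by
    have hder : ∀ φ ∈ Set.uIcc (0:ℝ) (Real.pi/2),
        HasDerivAt (fun x => -(Real.cos x ^ 3) / 3) (Real.sin φ * Real.cos φ ^ 2) φ := by
      intro φ _
      have := (((Real.hasDerivAt_cos φ).pow 3).neg).div_const 3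
      exact this.congr_deriv (by ring_nf)
    rw [intervalIntegral.integral_eq_sub_of_hasDerivAt hder (Continuous.intervalIntegrable (by fun_prop) _ _)]
    simp [Real.cos_pi_div_two]
    norm_num
  have hJ2 : (∫ φ in (0:ℝ)..(Real.pi/2), Real.sin φ * Real.cos φ ^ 4) = 1 / 5 := by
    have hder : ∀ φ ∈ Set.uIcc (0:ℝ) (Real.pi/2),
        HasDerivAt (fun x => -(Real.cos x ^ 5) / 5) (Real.sin φ * Real.cos φ ^ 4) φ := by
      intro φ _
      have := (((Real.hasDerivAt_cos φ).pow 5).neg).div_const 5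
      exact this.congr_deriv (by ring_nf)
    rw [intervalIntegral.integral_eq_sub_of_hasDerivAt hder (Continuous.intervalIntegrable (by fun_prop) _ _)]
    simp [Real.cos_pi_div_two]
    norm_num
  have hkey : s ^ 2 / 6 * A - s ^ 4 / 120 * B ≤
      ∫ φ in (0:ℝ)..(Real.pi/2), Real.sin φ *
        ∫ r in (0:ℝ)..1, r ^ 2 * ω r * (1 - Real.cos (r * Real.cos φ * s)) := by
    have hLeq : ∫ φ in (0:ℝ)..(Real.pi/2),
        (s ^ 2 / 2 * A * (Real.sin φ * Real.cos φ ^ 2) -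
          s ^ 4 / 24 * B * (Real.sin φ * Real.cos φ ^ 4)) =
        s ^ 2 / 6 * A - s ^ 4 / 120 * B := by
      rw [intervalIntegral.integral_sub ((Continuous.intervalIntegrable (by fun_prop) _ _).const_mul _)
        ((Continuous.intervalIntegrable (by fun_prop) _ _).const_mul _),
        intervalIntegral.integral_const_mul, intervalIntegral.integral_const_mul, hJ1, hJ2]
      ring
    rw [← hLeq]
    apply intervalIntegral.integral_mono_on (by positivity)
      (Continuous.intervalIntegrable (by fun_prop) _ _)
      (Continuous.intervalIntegrable (Real.continuous_sin.mul hIcont) _ _)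
    · intro φ hφ
      have hsin0 : 0 ≤ Real.sin φ :=
        Real.sin_nonneg_of_nonneg_of_le_pi hφ.1 (le_trans hφ.2 (by linarith))
      have hc0 : 0 ≤ Real.cos φ := Real.cos_nonneg_of_mem_Icc ⟨by linarith [hφ.1], hφ.2⟩
      have hc1 : Real.cos φ ≤ 1 := Real.cos_le_one φ
      have := mul_le_mul_of_nonneg_left (hinner (Real.cos φ) hc0 hc1) hsin0
      calc s ^ 2 / 2 * A * (Real.sin φ * Real.cos φ ^ 2) -
            s ^ 4 / 24 * B * (Real.sin φ * Real.cos φ ^ 4)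
          = Real.sin φ * (Real.cos φ ^ 2 * s ^ 2 / 2 * A - Real.cos φ ^ 4 * s ^ 4 / 24 * B) := by
            ring
        _ ≤ _ := this
  -- final arithmetic
  have hmul := mul_le_mul_of_nonneg_left hkey
    (show (0:ℝ) ≤ 4 * Real.pi / δ ^ 2 by positivity)
  have hfirst : ‖ξ‖ ^ 2 - (1 / 20) * ‖ξ‖ ^ 2 * (δ * ‖ξ‖) ^ 2 ≤
      (4 * Real.pi / δ ^ 2) *
        ∫ φ in (0:ℝ)..(Real.pi/2), Real.sin φ *
          ∫ r in (0:ℝ)..1, r ^ 2 * ω r * (1 - Real.cos (r * Real.cos φ * s)) := by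
    refine le_trans ?_ hmul
    have hδ2 : δ ^ 2 ≠ 0 := by positivity
    have hexp : (4 * Real.pi / δ ^ 2) * (s ^ 2 / 6 * A - s ^ 4 / 120 * B) =
        (4 * Real.pi * A) * ‖ξ‖ ^ 2 / 6 - (4 * Real.pi * B) * (δ ^ 2 * ‖ξ‖ ^ 4) / 120 := by
      rw [hs_def]; field_simp
    rw [hexp, hnorm]
    have h4πB : 4 * Real.pi * B ≤ 6 := by rw [← hnorm]; exact hmom
    have hnn : (0:ℝ) ≤ δ ^ 2 * ‖ξ‖ ^ 4 := by positivity
    have := mul_le_mul_of_nonneg_right h4πB hnn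
    nlinarith
  exact ⟨hfirst, by
    refine le_trans ?_ hfirst
    have hN2 : (0:ℝ) ≤ ‖ξ‖ ^ 2 := sq_nonneg _
    have hss : s ^ 2 ≤ 1 := by nlinarith
    have hE : (δ * ‖ξ‖) ^ 2 = s ^ 2 := by rw [hs_def]
    rw [hE]
    nlinarith⟩
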